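/- For every θ > 0 there exist s₀ ∈ (0,1) and a constant C > 0 such that for all s ∈ (0, s₀) and all x, y ∈ ℝ²: exp( -(9/(40 s)) Q_s(x,y) ) · k_{τ(s)θ}(x,y) ≤ C. -/
import Mathlib


noncomputable section

/-- `nsq x = |x|²`, the squared Euclidean norm on `ℝ²`. -/
def nsq (x : Fin 2 → ℝ) : ℝ := ∑ i, x i ^ 2

/-- The wedge product `x∧y = x₁y₂ - x₂y₁` on `ℝ²`. -/
def wedge (x y : Fin 2 → ℝ) : ℝ := x 0 * y 1 - x 1 * y 0

/-- The Euclidean inner product `⟨x,y⟩` on `ℝ²`. -/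
def dot2 (x y : Fin 2 → ℝ) : ℝ := x 0 * y 0 + x 1 * y 1

/-- `k_{tθ}(x,y) = exp(-(e^{-t}/(1-e^{-2t}))[(1-cos(tθ))⟨x,y⟩ + sin(tθ) x∧y])`. -/
def kker (t θ : ℝ) (x y : Fin 2 → ℝ) : ℝ :=
  Real.exp (-(Real.exp (-t) / (1 - Real.exp (-2 * t))) *
    ((1 - Real.cos (t * θ)) * dot2 x y + Real.sin (t * θ) * wedge x y))

/-- `τ(s) = log((1+s)/(1-s))` for `s ∈ (0,1)`. -/
def tau (s : ℝ) : ℝ := Real.log ((1 + s) / (1 - s))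

/-- `Q_s(x,y) = |(1+s)x - (1-s)y|²`. -/
def Qform (s : ℝ) (x y : Fin 2 → ℝ) : ℝ := nsq ((1 + s) • x - (1 - s) • y)

end

/-- AM-GM style absorption lemma. -/
lemma amgm_absorb (A B c : ℝ) (hA : 0 ≤ A) (hB : 0 ≤ B) (h : c ^ 2 ≤ 4 * A * B) :
    0 ≤ A + B + c := by
  nlinarith [sq_nonneg (A - B), sq_nonneg (A + B + c)]

/-- Core scalar inequality. -/
lemma core_ineq (a b u0 u1 v0 v1 : ℝ) (ha0 : 0 ≤ a) (ha : a ≤ 1/5)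
    (hb : b ^ 2 ≤ 16/5 * a) :
    0 ≤ 9/10 * ((u0 - v0) ^ 2 + (u1 - v1) ^ 2) + a * (u0 * v0 + u1 * v1)
      + b * (u0 * v1 - u1 * v0) := by
  have hWu : (u0 * v1 - u1 * v0) ^ 2
      ≤ (u0 ^ 2 + u1 ^ 2) * ((u0 - v0) ^ 2 + (u1 - v1) ^ 2) := by
    nlinarith [sq_nonneg (u0 * (v0 - u0) + u1 * (v1 - u1))]
  have hWv : (u0 * v1 - u1 * v0) ^ 2
      ≤ (v0 ^ 2 + v1 ^ 2) * ((u0 - v0) ^ 2 + (u1 - v1) ^ 2) := by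
    nlinarith [sq_nonneg (v0 * (v0 - u0) + v1 * (v1 - u1))]
  have hW2 : 2 * (u0 * v1 - u1 * v0) ^ 2
      ≤ (u0 ^ 2 + u1 ^ 2 + v0 ^ 2 + v1 ^ 2) * ((u0 - v0) ^ 2 + (u1 - v1) ^ 2) := by
    nlinarith
  have h1 : b ^ 2 * (u0 * v1 - u1 * v0) ^ 2 ≤ 16/5 * a * (u0 * v1 - u1 * v0) ^ 2 :=
    mul_le_mul_of_nonneg_right hb (sq_nonneg _)
  have h3 : a * (2 * (u0 * v1 - u1 * v0) ^ 2)
      ≤ a * ((u0 ^ 2 + u1 ^ 2 + v0 ^ 2 + v1 ^ 2) * ((u0 - v0) ^ 2 + (u1 - v1) ^ 2)) :=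
    mul_le_mul_of_nonneg_left hW2 ha0
  have hc : (b * (u0 * v1 - u1 * v0)) ^ 2
      ≤ 4 * (a / 2 * (u0 ^ 2 + u1 ^ 2 + v0 ^ 2 + v1 ^ 2))
        * (4/5 * ((u0 - v0) ^ 2 + (u1 - v1) ^ 2)) := by
    nlinarith [h1, h3]
  have hmain := amgm_absorb (a / 2 * (u0 ^ 2 + u1 ^ 2 + v0 ^ 2 + v1 ^ 2))
    (4/5 * ((u0 - v0) ^ 2 + (u1 - v1) ^ 2)) (b * (u0 * v1 - u1 * v0))
    (by positivity) (by positivity) hc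
  nlinarith [hmain, mul_nonneg (show (0:ℝ) ≤ 1/10 - a/2 by linarith)
    (show (0:ℝ) ≤ (u0 - v0) ^ 2 + (u1 - v1) ^ 2 by positivity)]

/-- Key inequality at the level of `x, y`. -/
lemma key_ineq (s a b : ℝ) (ha0 : 0 ≤ a) (ha : a ≤ 1/5) (hb : b ^ 2 ≤ 16/5 * a)
    (x y : Fin 2 → ℝ) :
    0 ≤ 9/10 * Qform s x y + (1 - s ^ 2) * (a * dot2 x y + b * wedge x y) := by
  have h := core_ineq a b ((1+s) * x 0) ((1+s) * x 1) ((1-s) * y 0) ((1-s) * y 1)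
    ha0 ha hb
  have hEq : 9/10 * Qform s x y + (1 - s ^ 2) * (a * dot2 x y + b * wedge x y)
      = 9/10 * (((1+s) * x 0 - (1-s) * y 0) ^ 2 + ((1+s) * x 1 - (1-s) * y 1) ^ 2)
        + a * ((1+s) * x 0 * ((1-s) * y 0) + (1+s) * x 1 * ((1-s) * y 1))
        + b * ((1+s) * x 0 * ((1-s) * y 1) - (1+s) * x 1 * ((1-s) * y 0)) := by
    simp only [Qform, nsq, dot2, wedge, Fin.sum_univ_two, Pi.sub_apply, Pi.smul_apply,
      smul_eq_mul]
    ring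
  rw [hEq]
  exact h

/-- For every `θ > 0` there exist `s₀ ∈ (0,1)` and `C > 0` such that for
all `s ∈ (0, s₀)` and all `x, y ∈ ℝ²`:
`exp(-(9/(40 s)) Q_s(x,y)) · k_{τ(s)θ}(x,y) ≤ C`. -/
theorem two_dim_factor_bounded_small_time (θ : ℝ) (hθ : 0 < θ) :
    ∃ s₀ : ℝ, 0 < s₀ ∧ s₀ < 1 ∧ ∃ C : ℝ, 0 < C ∧
      ∀ s : ℝ, 0 < s → s < s₀ → ∀ x y : Fin 2 → ℝ,
        Real.exp (-(9 / (40 * s)) * Qform s x y) * kker (tau s) θ x y ≤ C := by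
  refine ⟨min (1/10) (1/(5*θ)), lt_min (by norm_num) (by positivity),
    lt_of_le_of_lt (min_le_left _ _) (by norm_num), 1, one_pos, ?_⟩
  intro s hs hss x y
  have hs10 : s < 1/10 := lt_of_lt_of_le hss (min_le_left _ _)
  have hsθ : s * θ ≤ 1/5 := by
    have h := lt_of_lt_of_le hss (min_le_right _ _)
    rw [lt_div_iff₀ (by positivity : (0:ℝ) < 5*θ)] at h
    nlinarith
  have h1s : (0:ℝ) < 1 - s := by linarith
  have h1s' : (0:ℝ) < 1 + s := by linarith
  have hrpos : (0:ℝ) < (1+s)/(1-s) := by positivity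
  obtain ⟨t, htdef⟩ : ∃ t, t = tau s := ⟨_, rfl⟩
  -- upper bound on t
  have ht_hi : t ≤ 20/9 * s := by
    have h := Real.log_le_sub_one_of_pos hrpos
    have h2 : (1+s)/(1-s) - 1 ≤ 20/9 * s := by
      rw [sub_le_iff_le_add, div_le_iff₀ h1s]
      nlinarith
    rw [htdef, tau]
    linarith
  -- lower bound on t
  have ht_lo : 2 * s ≤ t := by
    rw [htdef, tau, Real.le_log_iff_exp_le hrpos]
    have hb := Real.exp_bound' (x := 2*s) (by linarith) (by linarith) (n := 3) (by norm_num)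
    rw [Finset.sum_range_succ, Finset.sum_range_succ, Finset.sum_range_succ,
      Finset.sum_range_zero] at hb
    norm_num [Nat.factorial] at hb
    rw [le_div_iff₀ h1s]
    nlinarith [hb]
  have ht0 : 0 < t := by linarith
  -- bounds on a and b
  obtain ⟨β, hβdef⟩ : ∃ β, β = t * θ := ⟨_, rfl⟩
  have hβ0 : 0 ≤ β := by rw [hβdef]; positivity
  have hβ : β ≤ 4/9 := by
    rw [hβdef]
    calc t * θ ≤ 20/9 * s * θ := mul_le_mul_of_nonneg_right ht_hi hθ.le
    _ = 20/9 * (s * θ) := by ring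
    _ ≤ 20/9 * (1/5) := by linarith
    _ = 4/9 := by norm_num
  have hβ2 : β ^ 2 ≤ 16/81 := by nlinarith
  obtain ⟨a, hadef⟩ : ∃ a, a = 1 - Real.cos β := ⟨_, rfl⟩
  obtain ⟨b, hbdef⟩ : ∃ b, b = Real.sin β := ⟨_, rfl⟩
  have hcosb := Real.cos_bound (x := β) (by rw [abs_of_nonneg hβ0]; linarith)
  have habs := abs_le.mp hcosb
  have hβ4 : |β| ^ 4 = β ^ 2 * β ^ 2 := by rw [abs_of_nonneg hβ0]; ring
  rw [hβ4] at habs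
  have hβ4' : β ^ 2 * β ^ 2 ≤ 16/81 * β ^ 2 := mul_le_mul_of_nonneg_right hβ2 (sq_nonneg β)
  have ha_lo : 12/25 * β ^ 2 ≤ a := by
    rw [hadef]
    linarith [habs.2]
  have ha0 : 0 ≤ a := by
    rw [hadef]
    linarith [Real.cos_le_one β]
  have ha_hi : a ≤ 1/5 := by
    have h := Real.one_sub_sq_div_two_le_cos (x := β)
    rw [hadef]
    nlinarith
  have hb2 : b ^ 2 ≤ 16/5 * a := by
    have hsle : Real.sin β ≤ β := Real.sin_le hβ0
    have hsge : 0 ≤ Real.sin β := Real.sin_nonneg_of_nonneg_of_le_pi hβ0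
      (by linarith [Real.pi_gt_three])
    have hbb : b ^ 2 ≤ β ^ 2 := by rw [hbdef]; nlinarith
    linarith [ha_lo]
  -- coefficient computation
  have hexp : Real.exp (-t) = (1-s)/(1+s) := by
    rw [htdef, tau, ← Real.log_inv, Real.exp_log (by positivity), inv_div]
  have hexp2 : Real.exp (-2 * t) = ((1-s)/(1+s)) ^ 2 := by
    rw [show (-2 * t) = -t + -t by ring, Real.exp_add, hexp]; ring
  have hcoef : Real.exp (-t) / (1 - Real.exp (-2 * t)) = (1 - s^2)/(4*s) := by
    rw [hexp, hexp2]
    have hden : 1 - ((1-s)/(1+s)) ^ 2 = 4*s/(1+s)^2 := by field_simp; ring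
    rw [hden, div_div_div_eq, div_eq_div_iff (by positivity) (by positivity)]
    ring
  -- main bound
  have key := key_ineq s a b ha0 ha_hi hb2 x y
  rw [kker, ← htdef, ← hβdef, ← hadef, ← hbdef, hcoef, ← Real.exp_add,
    Real.exp_le_one_iff]
  have hEq : -(9 / (40 * s)) * Qform s x y
      + -((1 - s^2)/(4*s)) * (a * dot2 x y + b * wedge x y)
      = -((9/10 * Qform s x y + (1 - s^2) * (a * dot2 x y + b * wedge x y)) / (4*s)) := by
    field_simp
    ring
  rw [hEq]
  exact neg_nonpos.mpr (div_nonneg key (by linarith))
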